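/- Let λ, μ ∈ 𝒫^l_n, let 0 ≤ j ≤ n and let s, t ∈ Std(μ). If s is λ-row-dominated on 1,…,j and s ⊴ t (that is, w_s ≤ w_t in the Bruhat order), then t is λ-row-dominated on 1,…,j. In particular, if s ∈ Std^λ(μ) and s ⊴ t, then t ∈ Std^λ(μ). -/

import Mathlib

namespace FS

open scoped Classical

/-- A node `(r, c, m)`: row `r`, column `c`, component `m` (all 1-based). -/
abbrev Node := ℕ × ℕ × ℕ

/-- Membership of a node in the Young diagram of the multipartition `p`,
where `p m r` is the `r`-th part of the `m`-th component. -/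
def InDiag (p : ℕ → ℕ → ℕ) (A : Node) : Prop :=
  1 ≤ A.2.1 ∧ A.2.1 ≤ p A.2.2 A.1

/-- `p` is an `l`-multipartition of `n` (components indexed `1,…,l`, rows indexed `1,…`). -/
def IsMP (l n : ℕ) (p : ℕ → ℕ → ℕ) : Prop :=
  (∀ m r, (m = 0 ∨ l < m ∨ r = 0 ∨ n < r) → p m r = 0) ∧
  (∀ m r, 1 ≤ r → p m (r + 1) ≤ p m r) ∧
  (∑ m ∈ Finset.Icc 1 l, ∑ r ∈ Finset.Icc 1 n, p m r) = n

/-- Total size of an `l`-multicomposition (rows bounded by `n`). -/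
def mpSize (l n : ℕ) (p : ℕ → ℕ → ℕ) : ℕ :=
  ∑ m ∈ Finset.Icc 1 l, ∑ r ∈ Finset.Icc 1 n, p m r

/-- Size of the `m`-th component. -/
def compSize (n : ℕ) (p : ℕ → ℕ → ℕ) (m : ℕ) : ℕ :=
  ∑ r ∈ Finset.Icc 1 n, p m r

/-- Length of column `c` of component `m`, i.e. `(p^(m))'_c`. -/
def colLen (n : ℕ) (p : ℕ → ℕ → ℕ) (m c : ℕ) : ℕ :=
  ((Finset.Icc 1 n).filter fun r => c ≤ p m r).card

/-- Dominance order on `l`-multicompositions: `Dom l N p q` means `p ⊵ q`. -/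
def Dom (l N : ℕ) (p q : ℕ → ℕ → ℕ) : Prop :=
  ∀ m r, 1 ≤ m → m ≤ l →
    (∑ m' ∈ Finset.Icc 1 (m - 1), compSize N q m') + ∑ r' ∈ Finset.Icc 1 r, q m r' ≤
      (∑ m' ∈ Finset.Icc 1 (m - 1), compSize N p m') + ∑ r' ∈ Finset.Icc 1 r, p m r'

/-- `t` is a `p`-tableau: a bijection from the diagram of `p` onto `{1,…,n}`. -/
def IsTab (n : ℕ) (p : ℕ → ℕ → ℕ) (t : Node → ℕ) : Prop :=
  (∀ A, InDiag p A → 1 ≤ t A ∧ t A ≤ n) ∧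
  (∀ A B, InDiag p A → InDiag p B → t A = t B → A = B) ∧
  (∀ i, 1 ≤ i → i ≤ n → ∃ A, InDiag p A ∧ t A = i)

/-- Entries increase from left to right along each row. -/
def RowStrict (p : ℕ → ℕ → ℕ) (t : Node → ℕ) : Prop :=
  ∀ r c m, InDiag p (r, c, m) → InDiag p (r, c + 1, m) → t (r, c, m) < t (r, c + 1, m)

/-- Entries increase down each column. -/
def ColStrict (p : ℕ → ℕ → ℕ) (t : Node → ℕ) : Prop :=
  ∀ r c m, InDiag p (r, c, m) → InDiag p (r + 1, c, m) → t (r, c, m) < t (r + 1, c, m)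

/-- A standard tableau is both row-strict and column-strict. -/
def IsStd (p : ℕ → ℕ → ℕ) (t : Node → ℕ) : Prop := RowStrict p t ∧ ColStrict p t

/-- The tableau `t_λ`, obtained by writing `1,…,n` in order down successive columns
from left to right (components from `l` down to `1`). -/
def colTab (l n : ℕ) (p : ℕ → ℕ → ℕ) : Node → ℕ := fun A =>
  (∑ m' ∈ Finset.Icc (A.2.2 + 1) l, compSize n p m') +
    (∑ c' ∈ Finset.Icc 1 (A.2.1 - 1), colLen n p A.2.2 c') + A.1

/-- The tableau `t^λ`, obtained by writing `1,…,n` in order along successive rows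
from top to bottom (components from `1` up to `l`). -/
def rowTab (n : ℕ) (p : ℕ → ℕ → ℕ) : Node → ℕ := fun A =>
  (∑ m' ∈ Finset.Icc 1 (A.2.2 - 1), compSize n p m') +
    (∑ r' ∈ Finset.Icc 1 (A.1 - 1), p A.2.2 r') + A.2.1

/-- The Coxeter generator `s_i = (i, i+1)` of the symmetric group. -/
def sw (i : ℕ) : Equiv.Perm ℕ := Equiv.swap i (i + 1)

/-- The product `s_{i_1} ⋯ s_{i_k}` corresponding to a word `L = [i_1,…,i_k]`. -/
def wordProd (L : List ℕ) : Equiv.Perm ℕ := (L.map sw).prod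

/-- `L` is an expression for `w` in the Coxeter generators `s_1,…,s_{n-1}` of `S_n`. -/
def IsWord (n : ℕ) (L : List ℕ) (w : Equiv.Perm ℕ) : Prop :=
  (∀ i ∈ L, 1 ≤ i ∧ i + 1 ≤ n) ∧ wordProd L = w

/-- The Coxeter length of `w ∈ S_n`. -/
noncomputable def len (n : ℕ) (w : Equiv.Perm ℕ) : ℕ :=
  sInf {k | ∃ L, IsWord n L w ∧ L.length = k}

/-- `L` is a reduced expression for `w ∈ S_n`. -/
def IsReduced (n : ℕ) (L : List ℕ) (w : Equiv.Perm ℕ) : Prop :=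
  IsWord n L w ∧ L.length = len n w

/-- The Bruhat order on `S_n`: `x ≤ w` iff some reduced expression for `w` has an
expression for `x` as a subsequence. -/
def BruhatLE (n : ℕ) (x w : Equiv.Perm ℕ) : Prop :=
  ∃ L, IsReduced n L w ∧ ∃ L', L'.Sublist L ∧ wordProd L' = x

/-- Strict Bruhat order. -/
def BruhatLT (n : ℕ) (x w : Equiv.Perm ℕ) : Prop := BruhatLE n x w ∧ x ≠ w

/-- The left (weak) order on `S_n`: `x ≤_L w` iff `ℓ(w) = ℓ(w x⁻¹) + ℓ(x)`. -/
def LeftLE (n : ℕ) (x w : Equiv.Perm ℕ) : Prop :=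
  len n w = len n (w * x⁻¹) + len n x

/-- `w` is a permutation of `{1,…,n}` (fixing everything else). -/
def PermOf (n : ℕ) (w : Equiv.Perm ℕ) : Prop := ∀ i, i = 0 ∨ n < i → w i = i

/-- `w` is the permutation sending the base tableau `base` to the tableau `t`
(e.g. `w = w_t` when `base = t_λ`). -/
def IsPermOfTab (n : ℕ) (p : ℕ → ℕ → ℕ) (base t : Node → ℕ) (w : Equiv.Perm ℕ) : Prop :=
  PermOf n w ∧ ∀ A, InDiag p A → w (base A) = t A

/-- `Shape(t↓j)`: the multicomposition whose `(m, r)` entry is the number of nodes in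
row `r` of component `m` whose entry under `t` is at most `j`. -/
def shape (n : ℕ) (p : ℕ → ℕ → ℕ) (t : Node → ℕ) (j : ℕ) : ℕ → ℕ → ℕ :=
  fun m r => ((Finset.Icc 1 n).filter fun c => c ≤ p m r ∧ t (r, c, m) ≤ j).card

/-- `Shape(t↓j)'`: the conjugate multicomposition, whose `(m, c)` entry is the number of
nodes in column `c` of component `l + 1 - m` whose entry under `t` is at most `j`. -/
def shapeConj (l n : ℕ) (p : ℕ → ℕ → ℕ) (t : Node → ℕ) (j : ℕ) : ℕ → ℕ → ℕ :=
  fun m c => ((Finset.Icc 1 n).filter fun r => c ≤ p (l + 1 - m) r ∧ t (r, c, l + 1 - m) ≤ j).card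

/-- `A` lies weakly to the left of `B`. -/
def WeaklyLeft (A B : Node) : Prop :=
  B.2.2 < A.2.2 ∨ (A.2.2 = B.2.2 ∧ A.2.1 ≤ B.2.1)

/-- `A` lies weakly above `B`. -/
def WeaklyAbove (A B : Node) : Prop :=
  A.2.2 < B.2.2 ∨ (A.2.2 = B.2.2 ∧ A.1 ≤ B.1)

/-- `A` lies weakly to the right of `B`. -/
def WeaklyRight (A B : Node) : Prop :=
  A.2.2 < B.2.2 ∨ (A.2.2 = B.2.2 ∧ B.2.1 ≤ A.2.1)

/-- `t` (a `mu`-tableau) is `lam`-column-dominated on `1,…,j`: each `i ≤ j` appears in `t`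
at least as far to the left as it does in `t_lam`. -/
def ColDomOn (l n : ℕ) (lam mu : ℕ → ℕ → ℕ) (t : Node → ℕ) (j : ℕ) : Prop :=
  ∀ i A B, 1 ≤ i → i ≤ j → InDiag mu A → t A = i → InDiag lam B →
    colTab l n lam B = i → WeaklyLeft A B

/-- `t` is weakly `lam`-column-dominated on `1,…,j`: each `i ≤ j` appears in `t` in a
component at least as far to the left as it does in `t_lam`. -/
def WColDomOn (l n : ℕ) (lam mu : ℕ → ℕ → ℕ) (t : Node → ℕ) (j : ℕ) : Prop :=
  ∀ i A B, 1 ≤ i → i ≤ j → InDiag mu A → t A = i → InDiag lam B →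
    colTab l n lam B = i → B.2.2 ≤ A.2.2

/-- `t` (a `mu`-tableau) is `lam`-row-dominated on `1,…,j`: each `i ≤ j` appears in `t`
at least as high as it does in `t^lam`. -/
def RowDomOn (n : ℕ) (lam mu : ℕ → ℕ → ℕ) (t : Node → ℕ) (j : ℕ) : Prop :=
  ∀ i A B, 1 ≤ i → i ≤ j → InDiag mu A → t A = i → InDiag lam B →
    rowTab n lam B = i → WeaklyAbove A B

/-- The multipartition `λ_L(c, m)`: the first `c` columns of component `m`, followed by
components `m+1,…,l`. -/
def leftPart (lam : ℕ → ℕ → ℕ) (c m : ℕ) : ℕ → ℕ → ℕ := fun k r =>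
  if k = 0 then 0 else if k = 1 then min (lam m r) c else lam (m + k - 1) r

/-- The multipartition `λ_R(c, m)`: components `1,…,m-1`, followed by the part of
component `m` after its first `c` columns. -/
def rightPart (lam : ℕ → ℕ → ℕ) (c m : ℕ) : ℕ → ℕ → ℕ := fun k r =>
  if k < m then lam k r else if k = m then lam m r - c else 0

/-- The multipartition `λ_T(r₀, m)`: components `1,…,m-1`, followed by the first `r₀`
rows of component `m`. -/
def topPart (lam : ℕ → ℕ → ℕ) (r₀ m : ℕ) : ℕ → ℕ → ℕ := fun k r =>
  if k < m then lam k r else if k = m then (if r ≤ r₀ then lam m r else 0) else 0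

/-- The multipartition `λ_B(r₀, m)`: the rows of component `m` after row `r₀`, followed
by components `m+1,…,l`. -/
def botPart (lam : ℕ → ℕ → ℕ) (r₀ m : ℕ) : ℕ → ℕ → ℕ := fun k r =>
  if k = 0 ∨ r = 0 then 0 else if k = 1 then lam m (r₀ + r) else lam (m + k - 1) r

/-- The glued tableau `t_L # t_R`: places `1,…,n_L` on the left part as in `t_L`, and
places `n_L + t_R(A)` at the node corresponding to each node `A` of the right part. -/
def glueLR (nL c m : ℕ) (tL tR : Node → ℕ) : Node → ℕ := fun A =>
  if A.2.2 < m then nL + tR A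
  else if A.2.2 = m then
    (if A.2.1 ≤ c then tL (A.1, A.2.1, 1) else nL + tR (A.1, A.2.1 - c, m))
  else tL (A.1, A.2.1, A.2.2 - m + 1)

/-- The tableau `t⁺` obtained from a tableau `t` of `μ_R(1,m)` by increasing all entries
by `k`, adjoining a first column with entries `1,…,k` to component `m`, and adjoining
empty components `m+1,…,l`. -/
def addFirstCol (k m : ℕ) (t : Node → ℕ) : Node → ℕ := fun A =>
  if A.2.2 = m then (if A.2.1 = 1 then A.1 else k + t (A.1, A.2.1 - 1, m))
  else k + t A

/-- The tableau `t⁺` obtained from a tableau `t` of `μ_L(d-1,m)` by adjoining empty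
components `1,…,m-1` and adjoining a column `d` to component `m` with entries
`nk+1,…,nk+k` from top to bottom. -/
def addLastCol (nk m d : ℕ) (t : Node → ℕ) : Node → ℕ := fun A =>
  if A.2.2 = m then (if A.2.1 = d then nk + A.1 else t (A.1, A.2.1, 1))
  else t (A.1, A.2.1, A.2.2 - m + 1)

/-- The `i`-th smallest element of a finite set of naturals (1-based). -/
def nthElt (S : Finset ℕ) (i : ℕ) : ℕ := (S.sort (· ≤ ·)).getD (i - 1) 0

/-- The set `S_B` of entries of `t_λ` lying in the bottom region (component `> m`, or
component `m` in a row `> r₀`). -/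
noncomputable def SB (l n : ℕ) (lam : ℕ → ℕ → ℕ) (r₀ m : ℕ) : Finset ℕ :=
  (Finset.Icc 1 n).filter fun i =>
    ∃ A, InDiag lam A ∧ colTab l n lam A = i ∧ (m < A.2.2 ∨ (A.2.2 = m ∧ r₀ < A.1))

/-- The glued tableau `t #̄ s`: on the bottom region the entries are `lab_B ∘ t` and on
the top region they are `lab_T ∘ s`, where `lab_B`, `lab_T` are the order-preserving
bijections onto `S_B`, `S_T`. -/
def glueBT (S_B S_T : Finset ℕ) (r₀ m : ℕ) (tB tT : Node → ℕ) : Node → ℕ := fun A =>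
  if A.2.2 < m then nthElt S_T (tT A)
  else if A.2.2 = m then
    (if A.1 ≤ r₀ then nthElt S_T (tT A) else nthElt S_B (tB (A.1 - r₀, A.2.1, 1)))
  else nthElt S_B (tB (A.1, A.2.1, A.2.2 - m + 1))

/-- The residue of a node `(r, c, m)` with respect to the multicharge `κ`:
`κ_m + c - r` in `ℤ/eℤ` (with `ZMod 0 = ℤ` encoding `e = ∞`). -/
def resNode (e : ℕ) (κ : ℕ → ZMod e) (A : Node) : ZMod e :=
  κ A.2.2 + (A.2.1 : ZMod e) - (A.1 : ZMod e)

lemma sw_apply (k x : ℕ) : sw k x = if x = k then k + 1 else if x = k + 1 then k else x := by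
  simp [sw, Equiv.swap_apply_def]

@[simp] lemma wordProd_nil : wordProd [] = 1 := rfl
lemma wordProd_cons (a : ℕ) (L : List ℕ) : wordProd (a :: L) = sw a * wordProd L := by
  simp [wordProd]
lemma wordProd_append (L M : List ℕ) : wordProd (L ++ M) = wordProd L * wordProd M := by
  simp [wordProd]
lemma wordProd_concat (L : List ℕ) (k : ℕ) : wordProd (L ++ [k]) = wordProd L * sw k := by
  simp [wordProd_append, wordProd]

lemma sw_mul_self (k : ℕ) : sw k * sw k = 1 := Equiv.swap_mul_self _ _

lemma permOf_mul {n : ℕ} {v w : Equiv.Perm ℕ} (hv : PermOf n v) (hw : PermOf n w) :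
    PermOf n (v * w) := fun i hi => by
  simp [Equiv.Perm.mul_apply, hw i hi, hv i hi]

lemma permOf_sw {n k : ℕ} (h1 : 1 ≤ k) (h2 : k + 1 ≤ n) : PermOf n (sw k) := by
  intro i hi
  rw [sw_apply]
  split_ifs <;> omega

lemma sw_mem {n k p : ℕ} (h1 : 1 ≤ k) (h2 : k + 1 ≤ n) (hp1 : 1 ≤ p) (hp2 : p ≤ n) :
    1 ≤ sw k p ∧ sw k p ≤ n := by
  rw [sw_apply]; split_ifs <;> omega

lemma permOf_wordProd {n : ℕ} {L : List ℕ} (h : ∀ i ∈ L, 1 ≤ i ∧ i + 1 ≤ n) :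
    PermOf n (wordProd L) := by
  induction L with
  | nil => intro i _; rfl
  | cons a L ih =>
    rw [wordProd_cons]
    exact permOf_mul (permOf_sw (h a (by simp)).1 (h a (by simp)).2)
      (ih fun i hi => h i (by simp [hi]))

lemma permOf_mem {n : ℕ} {w : Equiv.Perm ℕ} (hw : PermOf n w) {p : ℕ}
    (h1 : 1 ≤ p) (h2 : p ≤ n) : 1 ≤ w p ∧ w p ≤ n := by
  constructor
  · by_contra h
    have h0 : w p = 0 := by omega
    have : w 0 = 0 := hw 0 (Or.inl rfl)
    have := w.injective (h0.trans this.symm)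
    omega
  · by_contra h
    have : w (w p) = w p := hw (w p) (Or.inr (by omega))
    have := w.injective this
    omega

/-- inversions -/
def inv (n : ℕ) (v : Equiv.Perm ℕ) : ℕ :=
  ((Finset.Icc 1 n ×ˢ Finset.Icc 1 n).filter fun q => q.1 < q.2 ∧ v q.2 < v q.1).card

lemma sw_lt {k a b : ℕ} (hab : a < b) (hne : ¬(a = k ∧ b = k + 1)) : sw k a < sw k b := by
  rw [sw_apply, sw_apply]
  split_ifs <;> omega

lemma inv_mul_sw (n : ℕ) (v : Equiv.Perm ℕ) (k : ℕ) (h1 : 1 ≤ k) (h2 : k + 1 ≤ n) :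
    (v k < v (k + 1) → inv n (v * sw k) = inv n v + 1) ∧
    (v (k + 1) < v k → inv n (v * sw k) = inv n v - 1 ∧ 1 ≤ inv n v) := by
  classical
  set P : Equiv.Perm ℕ → Finset (ℕ × ℕ) := fun u =>
    (Finset.Icc 1 n ×ˢ Finset.Icc 1 n).filter fun q => q.1 < q.2 ∧ u q.2 < u q.1 with hP
  have hz : ((k, k+1) : ℕ × ℕ) ∈ Finset.Icc 1 n ×ˢ Finset.Icc 1 n := by
    simp [Finset.mem_product]; omega
  have key : ((P (v * sw k)).erase (k, k+1)).card = ((P v).erase (k, k+1)).card := by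
    apply Finset.card_bij' (fun q _ => (sw k q.1, sw k q.2)) (fun q _ => (sw k q.1, sw k q.2))
    · intro q hq
      simp only [Finset.mem_erase, hP, Finset.mem_filter, Finset.mem_product] at hq ⊢
      obtain ⟨hqz, ⟨hq1, hq2⟩, hlt, hvl⟩ := hq
      have hswne : ¬(q.1 = k ∧ q.2 = k + 1) := by
        intro h; exact hqz (by rw [Prod.ext_iff]; exact ⟨h.1, h.2⟩)
      have hord := sw_lt hlt hswne
      refine ⟨?_, ⟨?_, ?_⟩, hord, ?_⟩
      · intro h
        have e1 : sw k q.1 = k := congrArg Prod.fst h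
        have e2 : sw k q.2 = k + 1 := congrArg Prod.snd h
        rw [sw_apply] at e1 e2
        split_ifs at e1 e2 <;> omega
      · rw [Finset.mem_Icc] at hq1 ⊢
        exact sw_mem h1 h2 hq1.1 hq1.2
      · rw [Finset.mem_Icc] at hq2 ⊢
        exact sw_mem h1 h2 hq2.1 hq2.2
      · simpa [Equiv.Perm.mul_apply] using hvl
    · intro q hq
      simp only [Finset.mem_erase, hP, Finset.mem_filter, Finset.mem_product] at hq ⊢
      obtain ⟨hqz, ⟨hq1, hq2⟩, hlt, hvl⟩ := hq
      have hswne : ¬(q.1 = k ∧ q.2 = k + 1) := by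
        intro h; exact hqz (by rw [Prod.ext_iff]; exact ⟨h.1, h.2⟩)
      have hord := sw_lt hlt hswne
      refine ⟨?_, ⟨?_, ?_⟩, hord, ?_⟩
      · intro h
        have e1 : sw k q.1 = k := congrArg Prod.fst h
        have e2 : sw k q.2 = k + 1 := congrArg Prod.snd h
        rw [sw_apply] at e1 e2
        split_ifs at e1 e2 <;> omega
      · rw [Finset.mem_Icc] at hq1 ⊢
        exact sw_mem h1 h2 hq1.1 hq1.2
      · rw [Finset.mem_Icc] at hq2 ⊢
        exact sw_mem h1 h2 hq2.1 hq2.2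
      · simp only [Equiv.Perm.mul_apply]
        have e1 : sw k (sw k q.1) = q.1 := by rw [sw_apply, sw_apply]; split_ifs <;> omega
        have e2 : sw k (sw k q.2) = q.2 := by rw [sw_apply, sw_apply]; split_ifs <;> omega
        rwa [e1, e2]
    · intro q _
      have e1 : sw k (sw k q.1) = q.1 := by rw [sw_apply, sw_apply]; split_ifs <;> omega
      have e2 : sw k (sw k q.2) = q.2 := by rw [sw_apply, sw_apply]; split_ifs <;> omega
      simp [e1, e2]
    · intro q _
      have e1 : sw k (sw k q.1) = q.1 := by rw [sw_apply, sw_apply]; split_ifs <;> omega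
      have e2 : sw k (sw k q.2) = q.2 := by rw [sw_apply, sw_apply]; split_ifs <;> omega
      simp [e1, e2]
  have swk : sw k k = k + 1 := by rw [sw_apply]; simp
  have swk1 : sw k (k+1) = k := by rw [sw_apply]; split_ifs <;> omega
  constructor
  · intro hasc
    have hmem : ((k, k+1) : ℕ × ℕ) ∈ P (v * sw k) := by
      simp only [hP, Finset.mem_filter]
      exact ⟨hz, by omega, by simp [Equiv.Perm.mul_apply, swk, swk1]; omega⟩
    have hnmem : ((k, k+1) : ℕ × ℕ) ∉ P v := by
      simp only [hP, Finset.mem_filter]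
      push_neg
      intro _ _
      omega
    have e1 : (P (v * sw k)).card = ((P (v * sw k)).erase (k, k+1)).card + 1 := by
      rw [Finset.card_erase_of_mem hmem]
      have : 1 ≤ (P (v * sw k)).card := Finset.card_pos.2 ⟨_, hmem⟩
      omega
    have e2 : ((P v).erase (k, k+1)).card = (P v).card := by
      rw [Finset.erase_eq_of_notMem hnmem]
    show (P (v * sw k)).card = (P v).card + 1
    omega
  · intro hdesc
    have hnmem : ((k, k+1) : ℕ × ℕ) ∉ P (v * sw k) := by
      simp only [hP, Finset.mem_filter]
      push_neg
      intro _ _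
      simp [Equiv.Perm.mul_apply, swk, swk1]
      omega
    have hmem : ((k, k+1) : ℕ × ℕ) ∈ P v := by
      simp only [hP, Finset.mem_filter]
      exact ⟨hz, by omega, hdesc⟩
    have e1 : ((P (v * sw k)).erase (k, k+1)).card = (P (v * sw k)).card := by
      rw [Finset.erase_eq_of_notMem hnmem]
    have e2 : (P v).card = ((P v).erase (k, k+1)).card + 1 := by
      rw [Finset.card_erase_of_mem hmem]
      have : 1 ≤ (P v).card := Finset.card_pos.2 ⟨_, hmem⟩
      omega
    constructor
    · show (P (v * sw k)).card = (P v).card - 1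
      omega
    · show 1 ≤ (P v).card
      omega


lemma inv_one (n : ℕ) : inv n 1 = 0 := by
  simp only [inv]
  rw [Finset.filter_false_of_mem, Finset.card_empty]
  intro q _
  simp only [Equiv.Perm.one_apply]
  omega

lemma inv_le_length {n : ℕ} (L : List ℕ) (h : ∀ i ∈ L, 1 ≤ i ∧ i + 1 ≤ n) :
    inv n (wordProd L) ≤ L.length := by
  induction L using List.reverseRecOn with
  | nil => simpa using (inv_one n).le
  | append_singleton M k ih =>
    rw [wordProd_concat]
    have hk := h k (by simp)
    have hM : ∀ i ∈ M, 1 ≤ i ∧ i + 1 ≤ n := fun i hi => h i (by simp [hi])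
    have hih := ih hM
    set u := wordProd M
    have hstep := inv_mul_sw n u k hk.1 hk.2
    have hne : u k ≠ u (k + 1) := fun he => by have := u.injective he; omega
    rcases Nat.lt_or_ge (u k) (u (k+1)) with hc | hc
    · have := hstep.1 hc
      simp only [List.length_append, List.length_cons, List.length_nil]
      omega
    · have hd : u (k+1) < u k := by omega
      have := hstep.2 hd
      simp only [List.length_append, List.length_cons, List.length_nil]
      omega

lemma eq_one_of_incr {n : ℕ} {w : Equiv.Perm ℕ} (hw : PermOf n w)
    (hincr : ∀ p, 1 ≤ p → p + 1 ≤ n → w p < w (p + 1)) : w = 1 := by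
  have hge : ∀ p, 1 ≤ p → p ≤ n → p ≤ w p := by
    intro p
    induction p with
    | zero => intro h _; omega
    | succ p ih =>
      intro _ hp
      rcases Nat.eq_zero_or_pos p with h0 | h0
      · have := (permOf_mem hw (show (1:ℕ) ≤ p + 1 by omega) hp).1
        omega
      · have h1 : p ≤ w p := ih (by omega) (by omega)
        have h2 : w p < w (p+1) := hincr p (by omega) (by omega)
        omega
  have hle : ∀ d p, p = n - d → 1 ≤ p → w p ≤ p := by
    intro d
    induction d with
    | zero =>
      intro p hp h1
      have := (permOf_mem hw h1 (show p ≤ n by omega)).2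
      omega
    | succ d ih =>
      intro p hp h1
      rcases Nat.lt_or_ge (p + 1) (n - d) with h | h
      · omega
      · rcases Nat.lt_or_ge p n with hpn | hpn
        · have he : p + 1 = n - d := by omega
          have h2 : w (p+1) ≤ p + 1 := ih (p+1) he (by omega)
          have h3 : w p < w (p+1) := hincr p (by omega) (by omega)
          omega
        · have hpe : p = n := by omega
          subst hpe
          exact (permOf_mem hw (by omega) (by omega)).2
  apply Equiv.ext
  intro p
  simp only [Equiv.Perm.coe_one, id_eq]
  rcases Nat.eq_zero_or_pos p with h0 | h0
  · rw [h0]; exact hw 0 (Or.inl rfl)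
  rcases Nat.lt_or_ge n p with h | h
  · exact hw p (Or.inr h)
  · have h1 := hge p h0 h
    have h2 := hle (n - p) p (by omega) h0
    omega

lemma exists_word_of_length_inv {n : ℕ} :
    ∀ N (w : Equiv.Perm ℕ), PermOf n w → inv n w = N → ∃ L, IsWord n L w ∧ L.length = N := by
  intro N
  induction N using Nat.strong_induction_on with
  | _ N ih =>
    intro w hw hinv
    rcases Nat.eq_zero_or_pos N with h0 | h0
    · subst h0
      have hincr : ∀ p, 1 ≤ p → p + 1 ≤ n → w p < w (p + 1) := by
        intro p h1 h2
        by_contra hcon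
        have hne : w p ≠ w (p+1) := fun he => by have := w.injective he; omega
        have hlt : w (p+1) < w p := by omega
        have hm : ((p, p+1) : ℕ × ℕ) ∈
            (Finset.Icc 1 n ×ˢ Finset.Icc 1 n).filter fun q => q.1 < q.2 ∧ w q.2 < w q.1 := by
          simp only [Finset.mem_filter, Finset.mem_product, Finset.mem_Icc]
          exact ⟨⟨⟨h1, by omega⟩, ⟨by omega, h2⟩⟩, by omega, hlt⟩
        have : 1 ≤ inv n w := Finset.card_pos.2 ⟨_, hm⟩
        omega
      have := eq_one_of_incr hw hincr
      subst this
      exact ⟨[], ⟨by simp, rfl⟩, rfl⟩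
    · have hdesc : ∃ k, 1 ≤ k ∧ k + 1 ≤ n ∧ w (k+1) < w k := by
        by_contra hcon
        push_neg at hcon
        have hincr : ∀ p, 1 ≤ p → p + 1 ≤ n → w p < w (p + 1) := by
          intro p h1 h2
          have := hcon p h1 h2
          have hne : w p ≠ w (p+1) := fun he => by have := w.injective he; omega
          omega
        have := eq_one_of_incr hw hincr
        subst this
        rw [inv_one] at hinv
        omega
      obtain ⟨k, hk1, hk2, hkd⟩ := hdesc
      have hstep := (inv_mul_sw n w k hk1 hk2).2 hkd
      set v := w * sw k with hv
      have hvperm : PermOf n v := permOf_mul hw (permOf_sw hk1 hk2)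
      have hvinv : inv n v = N - 1 := by omega
      obtain ⟨L, hL, hLlen⟩ := ih (N-1) (by omega) v hvperm hvinv
      refine ⟨L ++ [k], ⟨?_, ?_⟩, by simp [hLlen]; omega⟩
      · intro i hi
        rcases List.mem_append.1 hi with h | h
        · exact hL.1 i h
        · simp at h; subst h; exact ⟨hk1, hk2⟩
      · rw [wordProd_concat, hL.2, hv, mul_assoc, sw_mul_self, mul_one]

lemma len_le_of_word {n : ℕ} {L : List ℕ} {w : Equiv.Perm ℕ} (h : IsWord n L w) :
    len n w ≤ L.length := Nat.sInf_le ⟨L, h, rfl⟩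

lemma exists_reduced_word {n : ℕ} {w : Equiv.Perm ℕ} (h : ∃ L, IsWord n L w) :
    ∃ L, IsWord n L w ∧ L.length = len n w := by
  obtain ⟨L, hL⟩ := h
  have hne : {k | ∃ L, IsWord n L w ∧ L.length = k}.Nonempty := ⟨L.length, L, hL, rfl⟩
  exact Nat.sInf_mem hne

/-- prefix of a reduced word is reduced -/
lemma prefix_reduced {n : ℕ} {M : List ℕ} {k : ℕ}
    (h : IsReduced n (M ++ [k]) (wordProd (M ++ [k]))) :
    IsReduced n M (wordProd M) ∧ 1 ≤ k ∧ k + 1 ≤ n := by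
  have hk := h.1.1 k (by simp)
  have hMw : IsWord n M (wordProd M) := ⟨fun i hi => h.1.1 i (by simp [hi]), rfl⟩
  refine ⟨⟨hMw, ?_⟩, hk⟩
  have hle : len n (wordProd M) ≤ M.length := len_le_of_word hMw
  rcases Nat.lt_or_ge (len n (wordProd M)) M.length with hlt | hge
  · exfalso
    obtain ⟨N, hN, hNlen⟩ := exists_reduced_word ⟨M, hMw⟩
    have hNk : IsWord n (N ++ [k]) (wordProd (M ++ [k])) := by
      refine ⟨?_, ?_⟩
      · intro i hi
        rcases List.mem_append.1 hi with hh | hh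
        · exact hN.1 i hh
        · simp at hh; subst hh; exact hk
      · rw [wordProd_concat, wordProd_concat, hN.2]
    have := len_le_of_word hNk
    have h2 := h.2
    simp only [List.length_append, List.length_cons, List.length_nil] at this h2
    omega
  · omega

/-- last-letter ascent for reduced words -/
lemma reduced_concat_ascent {n : ℕ} {M : List ℕ} {k : ℕ}
    (h : IsReduced n (M ++ [k]) (wordProd (M ++ [k]))) :
    wordProd M k < wordProd M (k + 1) := by
  obtain ⟨hMred, hk1, hk2⟩ := prefix_reduced h
  set u := wordProd M with hu
  have hne : u k ≠ u (k + 1) := fun he => by have := u.injective he; omega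
  by_contra hcon
  have hdesc : u (k+1) < u k := by omega
  have hstep := (inv_mul_sw n u k hk1 hk2).2 hdesc
  have hperm : PermOf n (u * sw k) := permOf_mul (permOf_wordProd hMred.1.1) (permOf_sw hk1 hk2)
  obtain ⟨L, hL, hLlen⟩ := exists_word_of_length_inv (inv n (u * sw k)) (u * sw k) hperm rfl
  have hinvu : inv n u ≤ M.length := inv_le_length M hMred.1.1
  have hlen1 : len n (wordProd (M ++ [k])) ≤ L.length := by
    apply len_le_of_word
    rw [show wordProd (M ++ [k]) = u * sw k from by rw [wordProd_concat]]
    exact hL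
  have h2 := h.2
  simp only [List.length_append, List.length_cons, List.length_nil] at h2
  omega


/-- number of positions `p ∈ [1, K]` with `v p ≤ i` -/
noncomputable def cnt (v : Equiv.Perm ℕ) (K i : ℕ) : ℕ :=
  ((Finset.Icc 1 K).filter fun p => v p ≤ i).card

lemma cnt_succ (v : Equiv.Perm ℕ) (K i : ℕ) :
    cnt v (K + 1) i = cnt v K i + (if v (K + 1) ≤ i then 1 else 0) := by
  unfold cnt
  have h : Finset.Icc 1 (K + 1) = insert (K + 1) (Finset.Icc 1 K) := by
    ext x; simp [Finset.mem_Icc, Finset.mem_insert]; omega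
  rw [h, Finset.filter_insert]
  split_ifs with hc
  · rw [Finset.card_insert_of_notMem (by simp [Finset.mem_Icc])]
  · simp

lemma cnt_sw_ne (u : Equiv.Perm ℕ) (k K i : ℕ) (hk0 : 1 ≤ k) (hK : K ≠ k) :
    cnt (u * sw k) K i = cnt u K i := by
  unfold cnt
  rcases Nat.lt_or_ge K k with h | h
  · congr 1
    apply Finset.filter_congr
    intro p hp
    simp only [Finset.mem_Icc] at hp
    have hfix : sw k p = p := by rw [sw_apply]; split_ifs <;> omega
    simp [Equiv.Perm.mul_apply, hfix]
  · have hk : k + 1 ≤ K := by omega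
    apply Finset.card_bij' (fun p _ => sw k p) (fun p _ => sw k p)
    · intro p hp
      simp only [Finset.mem_filter, Finset.mem_Icc] at hp ⊢
      obtain ⟨⟨hp1, hp2⟩, hpi⟩ := hp
      constructor
      · rw [sw_apply]; split_ifs <;> omega
      · simpa [Equiv.Perm.mul_apply] using hpi
    · intro p hp
      simp only [Finset.mem_filter, Finset.mem_Icc] at hp ⊢
      obtain ⟨⟨hp1, hp2⟩, hpi⟩ := hp
      have hswsw : sw k (sw k p) = p := by rw [sw_apply, sw_apply]; split_ifs <;> omega
      constructor
      · rw [sw_apply]; split_ifs <;> omega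
      · simp only [Equiv.Perm.mul_apply, hswsw]
        exact hpi
    · intro p _
      rw [sw_apply, sw_apply]; split_ifs <;> omega
    · intro p _
      rw [sw_apply, sw_apply]; split_ifs <;> omega

lemma cnt_sw_eq (u : Equiv.Perm ℕ) (k i : ℕ) (hk : 1 ≤ k) :
    cnt (u * sw k) k i = cnt u (k - 1) i + (if u (k + 1) ≤ i then 1 else 0) := by
  have h := cnt_succ (u * sw k) (k - 1) i
  rw [show k - 1 + 1 = k by omega] at h
  rw [h, cnt_sw_ne u k (k-1) i hk (by omega)]
  congr 1
  have : (u * sw k) k = u (k + 1) := by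
    simp only [Equiv.Perm.mul_apply]
    congr 1
    rw [sw_apply]; split_ifs <;> omega
  rw [this]

lemma cnt_at_k (u : Equiv.Perm ℕ) (k i : ℕ) (hk : 1 ≤ k) :
    cnt u k i = cnt u (k - 1) i + (if u k ≤ i then 1 else 0) := by
  have h := cnt_succ u (k - 1) i
  rw [show k - 1 + 1 = k by omega] at h
  exact h

/-- key monotonicity: subwords of reduced words have pointwise larger rank counts -/
lemma rank_mono {n : ℕ} : ∀ N (L : List ℕ), L.length = N →
    IsReduced n L (wordProd L) → ∀ L', L'.Sublist L →
    ∀ K i, cnt (wordProd L) K i ≤ cnt (wordProd L') K i := by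
  intro N
  induction N using Nat.strong_induction_on with
  | _ N ih =>
    intro L hlen hred L' hsub K i
    rcases List.eq_nil_or_concat L with rfl | ⟨M, k, hMk⟩
    · have : L' = [] := List.sublist_nil.mp hsub
      subst this
      exact le_refl _
    subst hMk
    simp only [List.concat_eq_append] at hred hsub hlen
    obtain ⟨hMred, hk1, hk2⟩ := prefix_reduced hred
    have hasc := reduced_concat_ascent hred
    set u := wordProd M with hu
    have hMlen : M.length < N := by
      simp at hlen; omega
    have ihM := ih M.length hMlen M rfl hMred
    have huw : ∀ K i, cnt (wordProd (M ++ [k])) K i ≤ cnt u K i := by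
      intro K i
      rw [wordProd_concat, ← hu]
      rcases eq_or_ne K k with rfl | hne
      · rw [cnt_sw_eq u K i hk1, cnt_at_k u K i hk1]
        have : (if u (K+1) ≤ i then 1 else 0) ≤ (if u K ≤ i then 1 else 0) := by
          split_ifs <;> omega
        omega
      · rw [cnt_sw_ne u k K i hk1 hne]
    have hsub' : L'.Sublist M ∨ ∃ M', L' = M' ++ [k] ∧ M'.Sublist M := by
      have h1 : L'.reverse.Sublist (k :: M.reverse) := by
        have := hsub.reverse
        simpa using this
      rcases List.sublist_cons_iff.mp h1 with h | ⟨r, hr, hrs⟩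
      · left
        have := h.reverse
        simpa using this
      · right
        refine ⟨r.reverse, ?_, ?_⟩
        · rw [← List.reverse_reverse L', hr]
          simp
        · have := hrs.reverse
          simpa using this
    show cnt (wordProd (List.concat M k)) K i ≤ cnt (wordProd L') K i
    simp only [List.concat_eq_append]
    rcases hsub' with h | ⟨M', rfl, hMs⟩
    · exact le_trans (huw K i) (ihM L' h K i)
    · have ihy := ihM M' hMs
      set y := wordProd M' with hy
      rw [wordProd_concat, wordProd_concat, ← hu, ← hy]
      rcases eq_or_ne K k with rfl | hne
      · rw [cnt_sw_eq u K i hk1, cnt_sw_eq y K i hk1]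
        have h1 : cnt u (K-1) i ≤ cnt y (K-1) i := ihy (K-1) i
        have h2 : cnt u K i ≤ cnt y K i := ihy K i
        have h3 : cnt u (K+1) i ≤ cnt y (K+1) i := ihy (K+1) i
        by_cases hui : u (K+1) ≤ i
        · by_cases hyi : y (K+1) ≤ i
          · simp only [if_pos hui, if_pos hyi]; omega
          · have e1 : cnt u (K+1) i = cnt u K i + 1 := by
              rw [cnt_succ, if_pos hui]
            have e2 : cnt y (K+1) i = cnt y K i := by
              rw [cnt_succ, if_neg hyi]
              omega
            have e3 : cnt u K i = cnt u (K-1) i + 1 := by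
              rw [cnt_at_k u K i hk1, if_pos (by omega : u K ≤ i)]
            have e4 : cnt y K i ≤ cnt y (K-1) i + 1 := by
              rw [cnt_at_k y K i hk1]
              split_ifs <;> omega
            simp only [if_pos hui, if_neg hyi]
            omega
        · simp only [if_neg hui]
          split_ifs <;> omega
      · rw [cnt_sw_ne u k K i hk1 hne, cnt_sw_ne y k K i hk1 hne]
        exact ihy K i

lemma rank_of_bruhat {n : ℕ} {x w : Equiv.Perm ℕ} (h : BruhatLE n x w) :
    ∀ K i, cnt w K i ≤ cnt x K i := by
  obtain ⟨L, hLred, L', hsub, hprod⟩ := h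
  intro K i
  have hw : wordProd L = w := hLred.1.2
  have hred' : IsReduced n L (wordProd L) := by rw [hw]; exact hLred
  have := rank_mono L.length L rfl hred' L' hsub K i
  rwa [hw, hprod] at this


section Tableau

variable {l n : ℕ} {p : ℕ → ℕ → ℕ}

lemma parts_anti (hp : IsMP l n p) {m r1 r2 : ℕ} (h1 : 1 ≤ r1) (h12 : r1 ≤ r2) :
    p m r2 ≤ p m r1 := by
  induction r2 with
  | zero => omega
  | succ r2 ih =>
    rcases Nat.lt_or_ge r1 (r2 + 1) with h | h
    · exact le_trans (hp.2.1 m r2 (by omega)) (ih (by omega))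
    · have : r1 = r2 + 1 := by omega
      rw [this]

lemma part_le_n (hp : IsMP l n p) (m r : ℕ) : p m r ≤ n := by
  by_cases h : m = 0 ∨ l < m ∨ r = 0 ∨ n < r
  · rw [hp.1 m r h]; omega
  · push_neg at h
    have h1 : p m r ≤ ∑ r' ∈ Finset.Icc 1 n, p m r' :=
      Finset.single_le_sum (fun _ _ => Nat.zero_le _) (by rw [Finset.mem_Icc]; omega)
    have h2 : (∑ r' ∈ Finset.Icc 1 n, p m r') ≤ ∑ m' ∈ Finset.Icc 1 l, ∑ r' ∈ Finset.Icc 1 n, p m' r' :=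
      Finset.single_le_sum (f := fun m' => ∑ r' ∈ Finset.Icc 1 n, p m' r')
        (fun _ _ => Nat.zero_le _) (by rw [Finset.mem_Icc]; omega)
    rw [hp.2.2] at h2
    omega

lemma diag_bounds (hp : IsMP l n p) {r c m : ℕ} (h : InDiag p (r, c, m)) :
    1 ≤ r ∧ r ≤ n ∧ 1 ≤ m ∧ m ≤ l ∧ 1 ≤ c ∧ c ≤ n := by
  obtain ⟨h1, h2⟩ := h
  simp only at h1 h2
  have hne : ¬(m = 0 ∨ l < m ∨ r = 0 ∨ n < r) := by
    intro hcon
    rw [hp.1 m r hcon] at h2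
    omega
  push_neg at hne
  have := part_le_n hp m r
  exact ⟨by omega, by omega, by omega, by omega, h1, by omega⟩

lemma row_le_colLen (hp : IsMP l n p) {r c m : ℕ} (h : InDiag p (r, c, m)) :
    r ≤ colLen n p m c := by
  obtain ⟨hr1, hrn, _, _, hc1, _⟩ := diag_bounds hp h
  have hsub : Finset.Icc 1 r ⊆ (Finset.Icc 1 n).filter fun r' => c ≤ p m r' := by
    intro r' hr'
    rw [Finset.mem_Icc] at hr'
    rw [Finset.mem_filter, Finset.mem_Icc]
    refine ⟨⟨hr'.1, by omega⟩, ?_⟩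
    exact le_trans h.2 (parts_anti hp hr'.1 (by omega))
  have := Finset.card_le_card hsub
  rwa [Nat.card_Icc, Nat.add_sub_cancel] at this

lemma compSize_eq_sum_colLen (hp : IsMP l n p) (m : ℕ) :
    compSize n p m = ∑ c ∈ Finset.Icc 1 n, colLen n p m c := by
  unfold compSize colLen
  have he : ∀ r ∈ Finset.Icc 1 n, p m r = ((Finset.Icc 1 n).filter fun c => c ≤ p m r).card := by
    intro r _
    have hle := part_le_n hp m r
    have : (Finset.Icc 1 n).filter (fun c => c ≤ p m r) = Finset.Icc 1 (p m r) := by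
      ext x
      simp only [Finset.mem_filter, Finset.mem_Icc]
      omega
    rw [this, Nat.card_Icc, Nat.add_sub_cancel]
  rw [Finset.sum_congr rfl he]
  simp only [Finset.card_filter]
  rw [Finset.sum_comm]

lemma inner_pos_le (hp : IsMP l n p) {r c m : ℕ} (h : InDiag p (r, c, m)) :
    (∑ c' ∈ Finset.Icc 1 (c - 1), colLen n p m c') + r ≤ compSize n p m := by
  obtain ⟨hr1, hrn, _, _, hc1, hcn⟩ := diag_bounds hp h
  have h1 : r ≤ colLen n p m c := row_le_colLen hp h
  have hins : Finset.Icc 1 c = insert c (Finset.Icc 1 (c - 1)) := by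
    ext x
    simp only [Finset.mem_Icc, Finset.mem_insert]
    omega
  have h2 : (∑ c' ∈ Finset.Icc 1 (c - 1), colLen n p m c') + colLen n p m c
      = ∑ c' ∈ Finset.Icc 1 c, colLen n p m c' := by
    rw [hins, Finset.sum_insert (by simp [Finset.mem_Icc]; omega)]
    omega
  have h3 : (∑ c' ∈ Finset.Icc 1 c, colLen n p m c') ≤ ∑ c' ∈ Finset.Icc 1 n, colLen n p m c' :=
    Finset.sum_le_sum_of_subset (Finset.Icc_subset_Icc (le_refl 1) hcn)
  rw [compSize_eq_sum_colLen hp]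
  omega

lemma sum_comp_split (hp : IsMP l n p) {m : ℕ} (h1 : 1 ≤ m) (h2 : m ≤ l) :
    (∑ m' ∈ Finset.Icc m l, compSize n p m')
      = compSize n p m + ∑ m' ∈ Finset.Icc (m + 1) l, compSize n p m' := by
  have hins : Finset.Icc m l = insert m (Finset.Icc (m + 1) l) := by
    ext x
    simp only [Finset.mem_Icc, Finset.mem_insert]
    omega
  rw [hins, Finset.sum_insert (by simp [Finset.mem_Icc])]

lemma sum_comp_total (hp : IsMP l n p) :
    (∑ m' ∈ Finset.Icc 1 l, compSize n p m') = n := hp.2.2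

/-- position of a node in the column reading: bounds -/
lemma colTab_le (hp : IsMP l n p) {r c m : ℕ} (h : InDiag p (r, c, m)) :
    colTab l n p (r, c, m) ≤ ∑ m' ∈ Finset.Icc m l, compSize n p m' := by
  obtain ⟨hr1, hrn, hm1, hml, hc1, hcn⟩ := diag_bounds hp h
  have := inner_pos_le hp h
  have := sum_comp_split hp hm1 hml
  unfold colTab
  simp only
  omega

lemma colTab_le_n (hp : IsMP l n p) {r c m : ℕ} (h : InDiag p (r, c, m)) :
    colTab l n p (r, c, m) ≤ n := by
  obtain ⟨hr1, hrn, hm1, hml, hc1, hcn⟩ := diag_bounds hp h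
  have h1 := colTab_le hp h
  have h2 : (∑ m' ∈ Finset.Icc m l, compSize n p m') ≤ ∑ m' ∈ Finset.Icc 1 l, compSize n p m' :=
    Finset.sum_le_sum_of_subset (Finset.Icc_subset_Icc hm1 (le_refl l))
  rw [sum_comp_total hp] at h2
  omega

lemma colTab_pos (hp : IsMP l n p) {r c m : ℕ} (h : InDiag p (r, c, m)) :
    (∑ m' ∈ Finset.Icc (m + 1) l, compSize n p m') + (∑ c' ∈ Finset.Icc 1 (c - 1), colLen n p m c') + 1
      ≤ colTab l n p (r, c, m) := by
  obtain ⟨hr1, _, _, _, _, _⟩ := diag_bounds hp h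
  unfold colTab
  simp only
  omega

lemma WeaklyAbove.trans {A B C : Node} (h1 : WeaklyAbove A B) (h2 : WeaklyAbove B C) :
    WeaklyAbove A C := by
  unfold WeaklyAbove at *
  omega

end Tableau


section Main

variable {l n : ℕ}

lemma inDiag_mk {p : ℕ → ℕ → ℕ} {r c m : ℕ} : InDiag p (r, c, m) ↔ 1 ≤ c ∧ c ≤ p m r := Iff.rfl

lemma rowTab_mk (n : ℕ) (p : ℕ → ℕ → ℕ) (r c m : ℕ) :
    rowTab n p (r, c, m) = (∑ m' ∈ Finset.Icc 1 (m - 1), compSize n p m') +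
      (∑ r' ∈ Finset.Icc 1 (r - 1), p m r') + c := rfl

lemma colTab_mk (l n : ℕ) (p : ℕ → ℕ → ℕ) (r c m : ℕ) :
    colTab l n p (r, c, m) = (∑ m' ∈ Finset.Icc (m + 1) l, compSize n p m') +
      (∑ c' ∈ Finset.Icc 1 (c - 1), colLen n p m c') + r := rfl

lemma sum_Icc_split (f : ℕ → ℕ) {c : ℕ} (hc : 1 ≤ c) :
    ∑ x ∈ Finset.Icc 1 c, f x = (∑ x ∈ Finset.Icc 1 (c - 1), f x) + f c := by
  have hins : Finset.Icc 1 c = insert c (Finset.Icc 1 (c - 1)) := by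
    ext x; simp only [Finset.mem_Icc, Finset.mem_insert]; omega
  rw [hins, Finset.sum_insert (by simp only [Finset.mem_Icc]; omega)]
  omega

lemma weaklyAbove_refl (A : Node) : WeaklyAbove A A := Or.inr ⟨rfl, le_refl _⟩

lemma entry_le_row {mu : ℕ → ℕ → ℕ} {t : Node → ℕ} (hmu : IsMP l n mu)
    (hrs : RowStrict mu t) {ρ m : ℕ} :
    ∀ c2 c1, 1 ≤ c1 → c1 ≤ c2 → InDiag mu (ρ, c2, m) → t (ρ, c1, m) ≤ t (ρ, c2, m) := by
  intro c2
  induction c2 with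
  | zero => intro c1 h1 h2 _; omega
  | succ c2 ih =>
    intro c1 h1 h2 hd
    rw [inDiag_mk] at hd
    rcases Nat.lt_or_ge c1 (c2 + 1) with h | h
    · have hd2 : InDiag mu (ρ, c2, m) := inDiag_mk.mpr ⟨by omega, by omega⟩
      have h3 := ih c1 h1 (by omega) hd2
      have h4 := hrs ρ c2 m hd2 (inDiag_mk.mpr ⟨by omega, by omega⟩)
      omega
    · have : c1 = c2 + 1 := by omega
      rw [this]

lemma entry_le_col {mu : ℕ → ℕ → ℕ} {t : Node → ℕ} (hmu : IsMP l n mu)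
    (hcs : ColStrict mu t) {c m : ℕ} :
    ∀ r2 r1, 1 ≤ r1 → r1 ≤ r2 → InDiag mu (r2, c, m) → t (r1, c, m) ≤ t (r2, c, m) := by
  intro r2
  induction r2 with
  | zero => intro r1 h1 h2 _; omega
  | succ r2 ih =>
    intro r1 h1 h2 hd
    rw [inDiag_mk] at hd
    rcases Nat.lt_or_ge r1 (r2 + 1) with h | h
    · have hanti : mu m (r2 + 1) ≤ mu m r2 := parts_anti hmu (by omega) (by omega)
      have hd2 : InDiag mu (r2, c, m) := inDiag_mk.mpr ⟨by omega, by omega⟩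
      have h3 := ih r1 h1 (by omega) hd2
      have h4 := hcs r2 c m hd2 (inDiag_mk.mpr ⟨by omega, by omega⟩)
      omega
    · have : r1 = r2 + 1 := by omega
      rw [this]

lemma peel_step {lam : ℕ → ℕ → ℕ} (hlam : IsMP l n lam) {B : Node} (hB : InDiag lam B)
    (h2 : 2 ≤ rowTab n lam B) :
    ∃ B', InDiag lam B' ∧ rowTab n lam B' + 1 = rowTab n lam B ∧ WeaklyAbove B' B := by
  obtain ⟨rB, cB, mB⟩ := B
  obtain ⟨hr1, hrn, hm1, hml, hc1, hcn⟩ := diag_bounds hlam hB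
  rw [inDiag_mk] at hB
  rw [rowTab_mk] at h2
  rcases Nat.lt_or_ge 1 cB with hc2 | hc2
  · -- cB ≥ 2
    refine ⟨(rB, cB - 1, mB), inDiag_mk.mpr ⟨by omega, by omega⟩, ?_, Or.inr ⟨rfl, le_refl _⟩⟩
    rw [rowTab_mk, rowTab_mk]
    have : Finset.Icc 1 (cB - 1 - 1) = Finset.Icc 1 (cB - 1 - 1) := rfl
    omega
  · -- cB = 1
    have hcB : cB = 1 := by omega
    rcases Nat.lt_or_ge 1 rB with hr2 | hr2
    · -- rB ≥ 2
      have hmono : lam mB rB ≤ lam mB (rB - 1) :=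
        parts_anti (m := mB) hlam (show 1 ≤ rB - 1 by omega) (show rB - 1 ≤ rB by omega)
      refine ⟨(rB - 1, lam mB (rB - 1), mB), inDiag_mk.mpr ⟨by omega, le_refl _⟩, ?_,
        Or.inr ⟨rfl, by omega⟩⟩
      rw [rowTab_mk, rowTab_mk]
      have hsp := sum_Icc_split (fun r' => lam mB r') (show 1 ≤ rB - 1 by omega)
      omega
    · -- rB = 1, cB = 1
      have hrB : rB = 1 := by omega
      have hSr : (∑ r' ∈ Finset.Icc 1 (rB - 1), lam mB r') = 0 := by
        rw [hrB]
        simp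
      have hSm : 1 ≤ ∑ m' ∈ Finset.Icc 1 (mB - 1), compSize n lam m' := by omega
      set S := (Finset.Icc 1 (mB - 1)).filter (fun m' => 1 ≤ compSize n lam m') with hS
      have hSne : S.Nonempty := by
        by_contra hcon
        rw [Finset.not_nonempty_iff_eq_empty] at hcon
        have h0 : (∑ m' ∈ Finset.Icc 1 (mB - 1), compSize n lam m') = 0 := by
          apply Finset.sum_eq_zero
          intro x hx
          by_contra hx0
          have hmem : x ∈ S := by
            rw [hS, Finset.mem_filter]
            exact ⟨hx, by omega⟩
          rw [hcon] at hmem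
          simp at hmem
        omega
      set ms := S.max' hSne with hms
      have hmsS : ms ∈ S := S.max'_mem hSne
      rw [hS, Finset.mem_filter, Finset.mem_Icc] at hmsS
      obtain ⟨⟨hms1, hms2⟩, hms3⟩ := hmsS
      have heq1 : (∑ m' ∈ Finset.Icc 1 ms, compSize n lam m')
          = ∑ m' ∈ Finset.Icc 1 (mB - 1), compSize n lam m' := by
        apply Finset.sum_subset (Finset.Icc_subset_Icc (le_refl 1) hms2)
        intro x hx hnx
        rw [Finset.mem_Icc] at hx hnx
        by_contra hx0
        have hxS : x ∈ S := by
          rw [hS, Finset.mem_filter, Finset.mem_Icc]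
          exact ⟨⟨hx.1, hx.2⟩, by omega⟩
        have := S.le_max' x hxS
        rw [← hms] at this
        omega
      set T := (Finset.Icc 1 n).filter (fun r' => 1 ≤ lam ms r') with hT
      have hTne : T.Nonempty := by
        by_contra hcon
        rw [Finset.not_nonempty_iff_eq_empty] at hcon
        have h0 : compSize n lam ms = 0 := by
          apply Finset.sum_eq_zero
          intro x hx
          by_contra hx0
          have hmem : x ∈ T := by
            rw [hT, Finset.mem_filter]
            exact ⟨hx, by omega⟩
          rw [hcon] at hmem
          simp at hmem
        omega
      set rs := T.max' hTne with hrs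
      have hrsT : rs ∈ T := T.max'_mem hTne
      rw [hT, Finset.mem_filter, Finset.mem_Icc] at hrsT
      obtain ⟨⟨hrs1, hrs2⟩, hrs3⟩ := hrsT
      have heq2 : (∑ r' ∈ Finset.Icc 1 rs, lam ms r') = compSize n lam ms := by
        apply Finset.sum_subset (Finset.Icc_subset_Icc (le_refl 1) hrs2)
        intro x hx hnx
        rw [Finset.mem_Icc] at hx hnx
        by_contra hx0
        have hxT : x ∈ T := by
          rw [hT, Finset.mem_filter, Finset.mem_Icc]
          exact ⟨⟨hx.1, hx.2⟩, by omega⟩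
        have := T.le_max' x hxT
        rw [← hrs] at this
        omega
      refine ⟨(rs, lam ms rs, ms), inDiag_mk.mpr ⟨hrs3, le_refl _⟩, ?_, Or.inl (by simp; omega)⟩
      rw [rowTab_mk, rowTab_mk]
      have hsp := sum_Icc_split (fun r' => lam ms r') hrs1
      have hsp2 := sum_Icc_split (fun m' => compSize n lam m') hms1
      omega

lemma peel {lam : ℕ → ℕ → ℕ} (hlam : IsMP l n lam) :
    ∀ d (B : Node), InDiag lam B → d < rowTab n lam B →
    ∃ B', InDiag lam B' ∧ rowTab n lam B' = rowTab n lam B - d ∧ WeaklyAbove B' B := by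
  intro d
  induction d with
  | zero => intro B hB _; exact ⟨B, hB, by omega, weaklyAbove_refl B⟩
  | succ d ih =>
    intro B hB hd
    obtain ⟨Bd, hBd, hBdr, hBda⟩ := ih B hB (by omega)
    obtain ⟨B', hB', hB'r, hB'a⟩ := peel_step hlam hBd (by omega)
    exact ⟨B', hB', by omega, hB'a.trans hBda⟩

end Main


noncomputable def pick (mu : ℕ → ℕ → ℕ) (s : Node → ℕ) (v : ℕ) : Node :=
  if h : ∃ X, InDiag mu X ∧ s X = v then h.choose else (0, 0, 0)

lemma pick_spec {mu : ℕ → ℕ → ℕ} {s : Node → ℕ} {v : ℕ}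
    (h : ∃ X, InDiag mu X ∧ s X = v) : InDiag mu (pick mu s v) ∧ s (pick mu s v) = v := by
  rw [pick, dif_pos h]
  exact h.choose_spec

/-- If a standard `μ`-tableau `s` is `λ`-row-dominated on `1,…,j`
and `s ⊴ t` (i.e. `w_s ≤ w_t` in the Bruhat order), then `t` is `λ`-row-dominated
on `1,…,j`. -/
theorem rowDom_of_bruhat_ge (l n : ℕ) (hl : 1 ≤ l) (hn : 1 ≤ n)
    (lam mu : ℕ → ℕ → ℕ) (hlam : IsMP l n lam) (hmu : IsMP l n mu)
    (j : ℕ) (hj : j ≤ n)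
    (s t : Node → ℕ) (hs : IsTab n mu s) (ht : IsTab n mu t)
    (hsstd : IsStd mu s) (htstd : IsStd mu t)
    (ws wt : Equiv.Perm ℕ)
    (hws : IsPermOfTab n mu (colTab l n mu) s ws)
    (hwt : IsPermOfTab n mu (colTab l n mu) t wt)
    (hdom : RowDomOn n lam mu s j)
    (hbru : BruhatLE n ws wt) :
    RowDomOn n lam mu t j := by
  intro i A B hi1 hij hA htA hB hrB
  by_contra hnot
  obtain ⟨rA, cA, mA⟩ := A
  obtain ⟨rB, cB, mB⟩ := B
  obtain ⟨hrA1, hrAn, hmA1, hmAl, hcA1, hcAn⟩ := diag_bounds hmu hA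
  obtain ⟨hrB1, hrBn, hmB1, hmBl, hcB1, hcBn⟩ := diag_bounds hlam hB
  have hnot' : ¬(mA < mB ∨ (mA = mB ∧ rA ≤ rB)) := hnot
  have hA' : 1 ≤ cA ∧ cA ≤ mu mA rA := hA
  have hrank := rank_of_bruhat hbru
  have hwsX : ∀ X : Node, InDiag mu X → ws (colTab l n mu X) = s X := hws.2
  have hwtX : ∀ X : Node, InDiag mu X → wt (colTab l n mu X) = t X := hwt.2
  have hdomc : ∀ i'' (X : Node), 1 ≤ i'' → i'' ≤ i → InDiag mu X → s X = i'' →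
      (X.2.2 < mB ∨ (X.2.2 = mB ∧ X.1 ≤ rB)) := by
    intro i'' X h1 h2 hX hsX
    obtain ⟨B', hB', hB'r, hB'a⟩ := peel hlam (i - i'') (rB, cB, mB) hB (by omega)
    have hw : WeaklyAbove X B' :=
      hdom i'' X B' h1 (by omega) hX hsX hB' (by rw [hB'r, hrB]; omega)
    exact hw.trans hB'a
  rcases Nat.lt_or_ge mB mA with hcase | hcase
  · -- Case 1: entry i of t is in a later component than mB
    set Nb := ∑ m' ∈ Finset.Icc (mB + 1) l, compSize n mu m' with hNb
    have hNbn : Nb ≤ n := by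
      have h1 := sum_comp_total hmu
      have h2 : Nb ≤ ∑ m' ∈ Finset.Icc 1 l, compSize n mu m' :=
        Finset.sum_le_sum_of_subset (Finset.Icc_subset_Icc (by omega) (le_refl l))
      omega
    have hposA_le : colTab l n mu (rA, cA, mA) ≤ Nb := by
      have h1 := colTab_le hmu hA
      have h2 : (∑ m' ∈ Finset.Icc mA l, compSize n mu m') ≤ Nb :=
        Finset.sum_le_sum_of_subset (Finset.Icc_subset_Icc (by omega) (le_refl l))
      omega
    have hposA_pos : 1 ≤ colTab l n mu (rA, cA, mA) := by rw [colTab_mk]; omega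
    have h_t : 1 ≤ cnt wt Nb i := by
      apply Finset.card_pos.mpr
      refine ⟨colTab l n mu (rA, cA, mA), Finset.mem_filter.mpr
        ⟨Finset.mem_Icc.mpr ⟨hposA_pos, hposA_le⟩, ?_⟩⟩
      rw [hwtX _ hA, htA]
    have h_s : cnt ws Nb i = 0 := by
      rw [cnt, Finset.card_eq_zero]
      apply Finset.eq_empty_of_forall_notMem
      intro p hp
      rw [Finset.mem_filter, Finset.mem_Icc] at hp
      obtain ⟨⟨hp1, hp2⟩, hpi⟩ := hp
      have hv := permOf_mem hws.1 hp1 (le_trans hp2 hNbn)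
      obtain ⟨X, hX, hsX⟩ := hs.2.2 (ws p) hv.1 hv.2
      obtain ⟨rX, cX, mX⟩ := X
      have hpeq : colTab l n mu (rX, cX, mX) = p :=
        ws.injective (by rw [hwsX _ hX, hsX])
      have habove : mX < mB ∨ (mX = mB ∧ rX ≤ rB) := hdomc (ws p) (rX, cX, mX) hv.1 hpi hX hsX
      have h1 := colTab_pos hmu hX
      have h2 : Nb ≤ ∑ m' ∈ Finset.Icc (mX + 1) l, compSize n mu m' :=
        Finset.sum_le_sum_of_subset (Finset.Icc_subset_Icc (by omega) (le_refl l))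
      rw [colTab_mk] at hpeq
      rw [colTab_mk] at h1
      omega
    have := hrank Nb i
    omega
  · -- Case 2: same component, lower row
    have hmeq : mA = mB ∧ rB < rA := by omega
    obtain ⟨hmeq, hrlt⟩ := hmeq
    subst hmeq
    set Nb := ∑ m' ∈ Finset.Icc (mA + 1) l, compSize n mu m' with hNb
    set Sc := ∑ c' ∈ Finset.Icc 1 (cA - 1), colLen n mu mA c' with hSc
    set K := Nb + Sc + (rB + 1) with hK
    have hcolA : rA ≤ colLen n mu mA cA := row_le_colLen hmu hA
    have hd1 : InDiag mu (rB + 1, cA, mA) :=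
      inDiag_mk.mpr ⟨hcA1, le_trans hA'.2 (parts_anti hmu (by omega) (by omega))⟩
    have hip : Sc + (rB + 1) ≤ compSize n mu mA := inner_pos_le hmu hd1
    have hsplit := sum_comp_split hmu hmA1 hmAl
    have htot := sum_comp_total hmu
    have hsubtot : (∑ m' ∈ Finset.Icc mA l, compSize n mu m') ≤
        ∑ m' ∈ Finset.Icc 1 l, compSize n mu m' :=
      Finset.sum_le_sum_of_subset (Finset.Icc_subset_Icc hmA1 (le_refl l))
    have hKn : K ≤ n := by omega
    -- lower bound for t
    have hLB : (rB + 1) * cA ≤ cnt wt K i := by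
      have hcard : ((Finset.Icc 1 (rB + 1)) ×ˢ (Finset.Icc 1 cA)).card = (rB + 1) * cA := by
        rw [Finset.card_product]
        simp [Nat.card_Icc]
      rw [← hcard, cnt]
      have hdq : ∀ q : ℕ × ℕ, q ∈ (Finset.Icc 1 (rB + 1)) ×ˢ (Finset.Icc 1 cA) →
          InDiag mu (q.1, q.2, mA) ∧ InDiag mu (q.1, cA, mA) := by
        intro q hq
        rw [Finset.mem_product, Finset.mem_Icc, Finset.mem_Icc] at hq
        have hanti : mu mA rA ≤ mu mA q.1 := parts_anti hmu (by omega) (by omega)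
        exact ⟨inDiag_mk.mpr ⟨by omega, by omega⟩, inDiag_mk.mpr ⟨by omega, by omega⟩⟩
      apply Finset.card_le_card_of_injOn (fun q => colTab l n mu (q.1, q.2, mA))
      · intro q hq
        simp only [Finset.mem_coe] at hq ⊢
        obtain ⟨hdq1, hdq2⟩ := hdq q hq
        rw [Finset.mem_product, Finset.mem_Icc, Finset.mem_Icc] at hq
        obtain ⟨⟨hq11, hq12⟩, hq21, hq22⟩ := hq
        rw [Finset.mem_filter, Finset.mem_Icc]
        refine ⟨⟨by rw [colTab_mk]; omega, ?_⟩, ?_⟩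
        · rw [colTab_mk]
          have hsum : (∑ c' ∈ Finset.Icc 1 (q.2 - 1), colLen n mu mA c') ≤ Sc :=
            Finset.sum_le_sum_of_subset (Finset.Icc_subset_Icc (le_refl 1) (by omega))
          omega
        · rw [hwtX _ hdq1]
          have h1 : t (q.1, q.2, mA) ≤ t (q.1, cA, mA) :=
            entry_le_row hmu htstd.1 cA q.2 hq21 hq22 hdq2
          have h2 : t (q.1, cA, mA) ≤ t (rA, cA, mA) :=
            entry_le_col hmu htstd.2 rA q.1 hq11 (by omega) hA
          rw [htA] at h2
          omega
      · intro q1 hq1 q2 hq2 heq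
        rw [Finset.mem_coe] at hq1 hq2
        obtain ⟨hdq1, _⟩ := hdq q1 hq1
        obtain ⟨hdq2, _⟩ := hdq q2 hq2
        have hteq : t (q1.1, q1.2, mA) = t (q2.1, q2.2, mA) := by
          rw [← hwtX _ hdq1, ← hwtX _ hdq2]
          simp only at heq
          rw [heq]
        have hnode := ht.2.1 _ _ hdq1 hdq2 hteq
        have e1 : q1.1 = q2.1 := congrArg (fun X : Node => X.1) hnode
        have e2 : q1.2 = q2.2 := congrArg (fun X : Node => X.2.1) hnode
        exact Prod.ext e1 e2
    -- upper bound for s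
    have hUB : cnt ws K i ≤ rB * cA := by
      have hcard : ((Finset.Icc 1 rB) ×ˢ (Finset.Icc 1 cA)).card = rB * cA := by
        rw [Finset.card_product]
        simp [Nat.card_Icc]
      rw [← hcard, cnt]
      have hkey : ∀ p ∈ (Finset.Icc 1 K).filter (fun p => ws p ≤ i),
          InDiag mu (pick mu s (ws p)) ∧ s (pick mu s (ws p)) = ws p ∧
          colTab l n mu (pick mu s (ws p)) = p ∧ (pick mu s (ws p)).2.2 = mA ∧
          1 ≤ (pick mu s (ws p)).1 ∧ (pick mu s (ws p)).1 ≤ rB ∧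
          1 ≤ (pick mu s (ws p)).2.1 ∧ (pick mu s (ws p)).2.1 ≤ cA := by
        intro p hp
        rw [Finset.mem_filter, Finset.mem_Icc] at hp
        obtain ⟨⟨hp1, hp2⟩, hpi⟩ := hp
        have hv := permOf_mem hws.1 hp1 (le_trans hp2 hKn)
        have hEx : ∃ X, InDiag mu X ∧ s X = ws p := hs.2.2 (ws p) hv.1 hv.2
        obtain ⟨hXd, hXs⟩ := pick_spec hEx
        set X := pick mu s (ws p) with hX
        have hXd' : InDiag mu (X.1, X.2.1, X.2.2) := hXd
        have hpeq : colTab l n mu (X.1, X.2.1, X.2.2) = p :=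
          ws.injective (by rw [show colTab l n mu (X.1, X.2.1, X.2.2) = colTab l n mu X from rfl,
            hwsX _ hXd, hXs])
        have habove : X.2.2 < mA ∨ (X.2.2 = mA ∧ X.1 ≤ rB) :=
          hdomc (ws p) X hv.1 hpi hXd hXs
        obtain ⟨hb1, hb2, hb3, hb4, hb5, hb6⟩ := diag_bounds hmu hXd'
        have h1 := colTab_pos hmu hXd'
        rw [colTab_mk] at h1 hpeq
        -- component must be exactly mA
        have hcomp : X.2.2 = mA := by
          by_contra hcon
          have hlt : X.2.2 < mA := by omega
          have h2 : (∑ m' ∈ Finset.Icc mA l, compSize n mu m') ≤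
              ∑ m' ∈ Finset.Icc (X.2.2 + 1) l, compSize n mu m' :=
            Finset.sum_le_sum_of_subset (Finset.Icc_subset_Icc (by omega) (le_refl l))
          omega
        have hrow : X.1 ≤ rB := by omega
        -- column bound
        have hcol : X.2.1 ≤ cA := by
          by_contra hcon
          have hlt : cA + 1 ≤ X.2.1 := by omega
          rw [hcomp] at h1
          have h2 : (∑ c' ∈ Finset.Icc 1 cA, colLen n mu mA c') ≤
              ∑ c' ∈ Finset.Icc 1 (X.2.1 - 1), colLen n mu mA c' :=
            Finset.sum_le_sum_of_subset (Finset.Icc_subset_Icc (le_refl 1) (by omega))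
          have h3 := sum_Icc_split (fun c' => colLen n mu mA c') hcA1
          rw [hcomp] at hpeq
          omega
        exact ⟨hXd, hXs, by rw [← hpeq, colTab_mk, hcomp], hcomp, hb1, hrow, hb5, hcol⟩
      apply Finset.card_le_card_of_injOn (fun p => ((pick mu s (ws p)).1, (pick mu s (ws p)).2.1))
      · intro p hp
        simp only [Finset.mem_coe] at hp ⊢
        obtain ⟨_, _, _, _, k1, k2, k3, k4⟩ := hkey p hp
        rw [Finset.mem_product, Finset.mem_Icc, Finset.mem_Icc]
        exact ⟨⟨k1, k2⟩, k3, k4⟩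
      · intro p1 hp1 p2 hp2 heq
        rw [Finset.mem_coe] at hp1 hp2
        obtain ⟨hd1', hs1, _, hc1', _⟩ := hkey p1 hp1
        obtain ⟨hd2', hs2, _, hc2', _⟩ := hkey p2 hp2
        simp only at heq
        have e1 : (pick mu s (ws p1)).1 = (pick mu s (ws p2)).1 :=
          congrArg (fun q : ℕ × ℕ => q.1) heq
        have e2 : (pick mu s (ws p1)).2.1 = (pick mu s (ws p2)).2.1 :=
          congrArg (fun q : ℕ × ℕ => q.2) heq
        have hXeq : pick mu s (ws p1) = pick mu s (ws p2) := by
          have e3 : (pick mu s (ws p1)).2.2 = (pick mu s (ws p2)).2.2 := by rw [hc1', hc2']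
          exact Prod.ext e1 (Prod.ext e2 e3)
        have : ws p1 = ws p2 := by rw [← hs1, ← hs2, hXeq]
        exact ws.injective this
    have := hrank K i
    have hmul : (rB + 1) * cA = rB * cA + cA := Nat.succ_mul rB cA
    omega



end FS
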